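/- The space N_r of normal tensors of order r on an n-dimensional vector space V has dimension C(n+1,2)·C(n+r-1,r) − n·C(n+r,r+1), where N_r is the kernel of the symmetrization map s : S²V* ⊗ S^rV* → V* ⊗ S^{r+1}V* over the last r+1 indices. -/

import Mathlib

open Module

namespace Stmt10Aux

variable {n : ℕ}



/-- The multiset of values of a tuple. -/
def mlt {d : ℕ} (k : Fin d → Fin n) : Multiset (Fin n) := (List.ofFn k : Multiset (Fin n))

lemma card_mlt {d : ℕ} (k : Fin d → Fin n) : Multiset.card (mlt k) = d := by simp [mlt]

lemma mlt_comp_perm {d : ℕ} (k : Fin d → Fin n) (σ : Equiv.Perm (Fin d)) :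
    mlt (k ∘ σ) = mlt k := Multiset.coe_eq_coe.2 (σ.ofFn_comp_perm k)

lemma exists_perm_of_mlt_eq {d : ℕ} {k k' : Fin d → Fin n} (h : mlt k = mlt k') :
    ∃ σ : Equiv.Perm (Fin d), k = k' ∘ σ := by
  have hp : (List.ofFn k).Perm (List.ofFn k') := Multiset.coe_eq_coe.1 h
  have h1 : (List.ofFn (k ∘ Tuple.sort k)).Perm (List.ofFn (k' ∘ Tuple.sort k')) :=
    ((Tuple.sort k).ofFn_comp_perm k).trans (hp.trans ((Tuple.sort k').ofFn_comp_perm k').symm)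
  have h2 : k ∘ Tuple.sort k = k' ∘ Tuple.sort k' :=
    List.ofFn_injective (List.Perm.eq_of_sortedLE
      (Tuple.monotone_sort k).sortedLE_ofFn (Tuple.monotone_sort k').sortedLE_ofFn h1)
  refine ⟨(Tuple.sort k).symm.trans (Tuple.sort k'), funext fun x => ?_⟩
  have := congrFun h2 ((Tuple.sort k).symm x)
  simpa using this

lemma mlt_succ {d : ℕ} (K : Fin (d + 1) → Fin n) :
    mlt K = K 0 ::ₘ mlt (K ∘ Fin.succ) := by
  simp only [mlt, List.ofFn_succ]; rfl

lemma mlt_cons {d : ℕ} (j : Fin n) (k : Fin d → Fin n) :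
    mlt (Fin.cons j k) = j ::ₘ mlt k := by
  have h1 : Fin.cons j k ∘ Fin.succ = k := by funext u; simp
  rw [mlt_succ, h1, Fin.cons_zero]

lemma cons_comp_succ_succAbove {d : ℕ} (i : Fin n) (K : Fin (d + 1) → Fin n) (t : Fin (d + 1)) :
    (Fin.cons i K : Fin (d + 2) → Fin n) ∘ (Fin.succ t).succAbove = Fin.cons i (K ∘ t.succAbove) := by
  funext u
  refine Fin.cases ?_ (fun v => ?_) u
  · simp
  · simp [Fin.succ_succAbove_succ]

lemma mlt_succAbove {d : ℕ} (K : Fin (d + 1) → Fin n) (t : Fin (d + 1)) :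
    mlt K = K t ::ₘ mlt (K ∘ t.succAbove) := by
  induction d with
  | zero =>
    have ht : t = 0 := Fin.eq_zero t
    subst ht
    rw [Fin.succAbove_zero, ← mlt_succ]
  | succ d ih =>
    refine Fin.cases ?_ (fun s => ?_) t
    · rw [Fin.succAbove_zero, ← mlt_succ]
    · have h1 : K ∘ (Fin.succ s).succAbove = Fin.cons (K 0) ((K ∘ Fin.succ) ∘ s.succAbove) := by
        funext u
        refine Fin.cases ?_ (fun v => ?_) u
        · simp
        · simp [Fin.succ_succAbove_succ]
      rw [mlt_succ K, ih (K ∘ Fin.succ) s, Multiset.cons_swap, h1, mlt_cons]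
      rfl

lemma exists_tuple (d : ℕ) (m : Multiset (Fin n)) (h : Multiset.card m = d) :
    ∃ k : Fin d → Fin n, mlt k = m := by
  induction m using Quotient.inductionOn with
  | h l =>
    simp only [Multiset.quot_mk_to_coe, Multiset.coe_card] at h
    subst h
    exact ⟨l.get, by simp [mlt, List.ofFn_get]⟩

lemma pair_eq_pair {a b c d : Fin n} (h : ({a, b} : Multiset (Fin n)) = {c, d}) :
    a = c ∧ b = d ∨ a = d ∧ b = c := by
  have h' : a ::ₘ ({b} : Multiset (Fin n)) = c ::ₘ {d} := by simpa using h
  rcases Multiset.cons_eq_cons.1 h' with ⟨h1, h2⟩ | ⟨hne, cs, h1, h2⟩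
  · exact Or.inl ⟨h1, by simpa using h2⟩
  · have hc : cs = 0 := by
      have := congrArg Multiset.card h1
      simpa using this
    subst hc
    simp only [Multiset.cons_zero, Multiset.singleton_inj] at h1 h2
    exact Or.inr ⟨h2.symm, h1⟩


lemma mlt_two (k : Fin 2 → Fin n) : mlt k = {k 0, k 1} := by
  rw [mlt_succ, mlt_succ]
  have h0 : mlt ((k ∘ Fin.succ) ∘ Fin.succ) = 0 := by simp [mlt]
  rw [h0]
  rfl

/-- Choice of a representative tuple for an element of `Sym (Fin n) d`. -/
noncomputable def tupOf {d : ℕ} (m : Sym (Fin n) d) : Fin d → Fin n :=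
  (exists_tuple d (m : Multiset (Fin n)) m.2).choose

lemma mlt_tupOf {d : ℕ} (m : Sym (Fin n) d) : mlt (tupOf m) = (m : Multiset (Fin n)) :=
  (exists_tuple d (m : Multiset (Fin n)) m.2).choose_spec

/-- `Sym` element attached to a tuple. -/
noncomputable def symOf {d : ℕ} (k : Fin d → Fin n) : Sym (Fin n) d := ⟨mlt k, card_mlt k⟩

variable (n) in
def Usub (d : ℕ) : Submodule ℝ (Fin n → (Fin d → Fin n) → ℝ) where
  carrier := {S | ∀ (i : Fin n) (k : Fin d → Fin n) (σ : Equiv.Perm (Fin d)), S i (k ∘ σ) = S i k}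
  add_mem' := fun hS hT i k σ => by simp [hS i k σ, hT i k σ]
  zero_mem' := fun i k σ => rfl
  smul_mem' := fun c S hS i k σ => by simp [hS i k σ]



lemma Usub_def {d : ℕ} (S : Fin n → (Fin d → Fin n) → ℝ) : S ∈ Usub n d ↔
    ∀ (i : Fin n) (k : Fin d → Fin n) (σ : Equiv.Perm (Fin d)), S i (k ∘ σ) = S i k :=
  Iff.rfl

lemma U_apply_eq {d : ℕ} {S : Fin n → (Fin d → Fin n) → ℝ} (hS : S ∈ Usub n d)
    {i : Fin n} {k k' : Fin d → Fin n} (h : mlt k = mlt k') : S i k = S i k' := by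
  obtain ⟨σ, rfl⟩ := exists_perm_of_mlt_eq h
  exact hS i k' σ

/-- Linear equivalence of the symmetric subspace with functions on `Fin n × Sym`. -/
noncomputable def UEquiv (d : ℕ) : Usub n d ≃ₗ[ℝ] (Fin n × Sym (Fin n) d → ℝ) where
  toFun S := fun p => (S : Fin n → (Fin d → Fin n) → ℝ) p.1 (tupOf p.2)
  map_add' S T := rfl
  map_smul' c S := rfl
  invFun g := ⟨fun i k => g (i, symOf k), by
    intro i k σ
    have : symOf (k ∘ σ) = symOf k := Subtype.ext (mlt_comp_perm k σ)
    simp [this]⟩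
  left_inv S := by
    apply Subtype.ext
    funext i k
    exact U_apply_eq S.2 (by rw [mlt_tupOf]; rfl)
  right_inv g := by
    funext p
    have : symOf (tupOf p.2) = p.2 := Subtype.ext (mlt_tupOf p.2)
    simp [this]

lemma finrank_U (d : ℕ) : finrank ℝ (Usub n d) = n * (n + d - 1).choose d := by
  classical
  rw [(UEquiv d).finrank_eq, finrank_fintype_fun_eq_card, Fintype.card_prod, Fintype.card_fin,
    Sym.card_sym_eq_choose, Fintype.card_fin]


variable (n) in
def Wsub (d : ℕ) : Submodule ℝ (Fin n → Fin n → (Fin d → Fin n) → ℝ) where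
  carrier := {T | (∀ i j k, T i j k = T j i k) ∧
    ∀ (i j : Fin n) (k : Fin d → Fin n) (σ : Equiv.Perm (Fin d)), T i j (k ∘ σ) = T i j k}
  add_mem' := fun hS hT => ⟨fun i j k => by simp [hS.1 i j k, hT.1 i j k],
    fun i j k σ => by simp [hS.2 i j k σ, hT.2 i j k σ]⟩
  zero_mem' := ⟨fun _ _ _ => rfl, fun _ _ _ _ => rfl⟩
  smul_mem' := fun c T hT => ⟨fun i j k => by simp [hT.1 i j k],
    fun i j k σ => by simp [hT.2 i j k σ]⟩


lemma Wsub_def {d : ℕ} (T : Fin n → Fin n → (Fin d → Fin n) → ℝ) : T ∈ Wsub n d ↔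
    (∀ i j k, T i j k = T j i k) ∧
    ∀ (i j : Fin n) (k : Fin d → Fin n) (σ : Equiv.Perm (Fin d)), T i j (k ∘ σ) = T i j k :=
  Iff.rfl

lemma W_apply_eq {d : ℕ} {T : Fin n → Fin n → (Fin d → Fin n) → ℝ} (hT : T ∈ Wsub n d)
    {i j i' j' : Fin n} {k k' : Fin d → Fin n}
    (hp : ({i, j} : Multiset (Fin n)) = {i', j'}) (h : mlt k = mlt k') :
    T i j k = T i' j' k' := by
  obtain ⟨σ, rfl⟩ := exists_perm_of_mlt_eq h
  rw [hT.2 i j k' σ]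
  rcases pair_eq_pair hp with ⟨rfl, rfl⟩ | ⟨rfl, rfl⟩
  · rfl
  · exact hT.1 _ _ _

/-- Linear equivalence of the doubly-symmetric subspace with functions on `Sym 2 × Sym d`. -/
noncomputable def WEquiv (d : ℕ) : Wsub n d ≃ₗ[ℝ] (Sym (Fin n) 2 × Sym (Fin n) d → ℝ) where
  toFun T := fun p => (T : Fin n → Fin n → (Fin d → Fin n) → ℝ)
    (tupOf p.1 0) (tupOf p.1 1) (tupOf p.2)
  map_add' S T := rfl
  map_smul' c S := rfl
  invFun g := ⟨fun i j k => g (symOf ![i, j], symOf k), by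
    constructor
    · intro i j k
      have : symOf ![j, i] = symOf ![i, j] := Subtype.ext (by
        show mlt ![j, i] = mlt ![i, j]
        rw [mlt_two, mlt_two]
        exact Multiset.cons_swap j i {})
      simp [this]
    · intro i j k σ
      have : symOf (k ∘ σ) = symOf k := Subtype.ext (mlt_comp_perm k σ)
      simp [this]⟩
  left_inv T := by
    apply Subtype.ext
    funext i j k
    refine W_apply_eq T.2 ?_ (by rw [mlt_tupOf]; rfl)
    rw [← mlt_two, mlt_tupOf]
    show (symOf ![i, j] : Multiset (Fin n)) = {i, j}
    show mlt ![i, j] = {i, j}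
    rw [mlt_two ![i, j]]
    simp
  right_inv g := by
    funext p
    have h1 : symOf ![tupOf p.1 0, tupOf p.1 1] = p.1 := Subtype.ext (by
      show mlt ![tupOf p.1 0, tupOf p.1 1] = _
      rw [mlt_two]
      simp only [Matrix.cons_val_zero, Matrix.cons_val_one, Matrix.head_cons]
      rw [← mlt_two (tupOf p.1)]
      exact mlt_tupOf p.1)
    have h2 : symOf (tupOf p.2) = p.2 := Subtype.ext (mlt_tupOf p.2)
    simp [h1, h2]

lemma finrank_W (d : ℕ) : finrank ℝ (Wsub n d) = (n + 1).choose 2 * (n + d - 1).choose d := by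
  classical
  rw [(WEquiv d).finrank_eq, finrank_fintype_fun_eq_card, Fintype.card_prod,
    Sym.card_sym_eq_choose, Sym.card_sym_eq_choose, Fintype.card_fin]
  norm_num




variable (n) in
/-- The symmetrization map over the last `d+1` indices. -/
def smap (d : ℕ) : (Fin n → Fin n → (Fin d → Fin n) → ℝ) →ₗ[ℝ]
    (Fin n → (Fin (d + 1) → Fin n) → ℝ) where
  toFun T := fun i K => ∑ t : Fin (d + 1), T i (K t) (K ∘ t.succAbove)
  map_add' T S := by
    funext i K
    simp [Finset.sum_add_distrib]
  map_smul' c T := by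
    funext i K
    simp [Finset.mul_sum]

/-- Key multiset identity: removing the `t`-th entry. -/
lemma mlt_succAbove_eq {d : ℕ} {K K' : Fin (d + 1) → Fin n} {t t' : Fin (d + 1)}
    (h : mlt K = mlt K') (he : K t = K' t') :
    mlt (K ∘ t.succAbove) = mlt (K' ∘ t'.succAbove) := by
  have h1 := mlt_succAbove K t
  have h2 := mlt_succAbove K' t'
  rw [h1, h2, he] at h
  exact (Multiset.cons_inj_right _).1 h

lemma smap_mem_U {d : ℕ} {T : Fin n → Fin n → (Fin d → Fin n) → ℝ} (hT : T ∈ Wsub n d) :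
    smap n d T ∈ Usub n (d + 1) := by
  rw [Usub_def]
  intro i K σ
  show ∑ t : Fin (d + 1), T i ((K ∘ σ) t) ((K ∘ σ) ∘ t.succAbove)
    = ∑ t : Fin (d + 1), T i (K t) (K ∘ t.succAbove)
  rw [← Equiv.sum_comp σ (fun t => T i (K t) (K ∘ t.succAbove))]
  refine Finset.sum_congr rfl fun t _ => ?_
  refine W_apply_eq hT rfl ?_
  exact mlt_succAbove_eq (K := K ∘ σ) (K' := K) (t := t) (t' := σ t) (mlt_comp_perm K σ) rfl

/-- The auxiliary full symmetrization. -/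
def gmap {d : ℕ} (S : Fin n → (Fin (d + 1) → Fin n) → ℝ) (M : Fin (d + 2) → Fin n) : ℝ :=
  ∑ p : Fin (d + 2), S (M p) (M ∘ p.succAbove)

lemma gmap_eq {d : ℕ} {S : Fin n → (Fin (d + 1) → Fin n) → ℝ} (hS : S ∈ Usub n (d + 1))
    {M M' : Fin (d + 2) → Fin n} (h : mlt M = mlt M') : gmap S M = gmap S M' := by
  obtain ⟨σ, rfl⟩ : ∃ σ : Equiv.Perm (Fin (d + 2)), M = M' ∘ σ := exists_perm_of_mlt_eq h
  simp only [gmap]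
  rw [← Equiv.sum_comp σ (fun p => S (M' p) (M' ∘ p.succAbove))]
  refine Finset.sum_congr rfl fun p _ => ?_
  exact U_apply_eq hS (mlt_succAbove_eq (mlt_comp_perm M' σ) rfl)


/-- Explicit preimage under the symmetrization map. -/
noncomputable def pre {d : ℕ} (S : Fin n → (Fin (d + 1) → Fin n) → ℝ) :
    Fin n → Fin n → (Fin d → Fin n) → ℝ :=
  fun i j k => ((d : ℝ))⁻¹ * (S i (Fin.cons j k) + S j (Fin.cons i k))
    - ((d : ℝ) * ((d : ℝ) + 1))⁻¹ * gmap S (Fin.cons i (Fin.cons j k))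

lemma pre_mem_W {d : ℕ} {S : Fin n → (Fin (d + 1) → Fin n) → ℝ} (hS : S ∈ Usub n (d + 1)) :
    pre S ∈ Wsub n d := by
  rw [Wsub_def]
  constructor
  · intro i j k
    unfold pre
    rw [add_comm (S i (Fin.cons j k))]
    congr 1
    congr 1
    refine gmap_eq hS ?_
    rw [mlt_cons, mlt_cons, mlt_cons, mlt_cons, Multiset.cons_swap]
  · intro i j k σ
    unfold pre
    have h1 : mlt (Fin.cons j (k ∘ σ)) = mlt (Fin.cons j k) := by
      rw [mlt_cons, mlt_cons, mlt_comp_perm]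
    have h2 : mlt (Fin.cons i (k ∘ σ)) = mlt (Fin.cons i k) := by
      rw [mlt_cons, mlt_cons, mlt_comp_perm]
    rw [U_apply_eq hS h1, U_apply_eq hS h2]
    congr 1
    congr 1
    refine gmap_eq hS ?_
    rw [mlt_cons, mlt_cons, mlt_cons, mlt_cons, mlt_comp_perm]

lemma gmap_cons {d : ℕ} {S : Fin n → (Fin (d + 1) → Fin n) → ℝ} (i : Fin n)
    (K : Fin (d + 1) → Fin n) :
    gmap S (Fin.cons i K) = S i K + ∑ q : Fin (d + 1), S (K q) (Fin.cons i (K ∘ q.succAbove)) := by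
  unfold gmap
  rw [Fin.sum_univ_succ]
  have h0 : (Fin.cons i K : Fin (d + 2) → Fin n) ∘ (0 : Fin (d + 2)).succAbove = K := by
    funext u; simp
  rw [h0, Fin.cons_zero]
  congr 1
  refine Finset.sum_congr rfl fun q _ => ?_
  rw [Fin.cons_succ, cons_comp_succ_succAbove]

lemma smap_pre {d : ℕ} (hd : d ≠ 0) {S : Fin n → (Fin (d + 1) → Fin n) → ℝ}
    (hS : S ∈ Usub n (d + 1)) :
    smap n d (pre S) = S := by
  funext i K
  show ∑ t : Fin (d + 1), pre S i (K t) (K ∘ t.succAbove) = S i K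
  have key : ∀ t : Fin (d + 1),
      pre S i (K t) (K ∘ t.succAbove) = ((d : ℝ))⁻¹ * (S i K + S (K t) (Fin.cons i (K ∘ t.succAbove)))
        - ((d : ℝ) * ((d : ℝ) + 1))⁻¹ * gmap S (Fin.cons i K) := by
    intro t
    unfold pre
    have h1 : S i (Fin.cons (K t) (K ∘ t.succAbove)) = S i K := by
      refine U_apply_eq hS ?_
      rw [mlt_cons, ← mlt_succAbove]
    have h2 : gmap S (Fin.cons i (Fin.cons (K t) (K ∘ t.succAbove))) = gmap S (Fin.cons i K) := by
      refine gmap_eq hS ?_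
      rw [mlt_cons, mlt_cons, mlt_cons, ← mlt_succAbove]
    rw [h1, h2]
  rw [Finset.sum_congr rfl (fun t _ => key t)]
  rw [Finset.sum_sub_distrib, ← Finset.mul_sum, Finset.sum_add_distrib, Finset.sum_const,
    Finset.sum_const, Finset.card_univ, Fintype.card_fin, gmap_cons]
  have hd1 : ((d : ℝ)) ≠ 0 := by exact_mod_cast hd
  have hd2 : ((d : ℝ) + 1) ≠ 0 := by positivity
  set A := ∑ q : Fin (d + 1), S (K q) (Fin.cons i (K ∘ q.succAbove)) with hA
  have : (d + 1 : ℕ) • S i K = ((d : ℝ) + 1) * S i K := by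
    rw [nsmul_eq_mul]
    push_cast
    ring
  rw [this]
  field_simp
  have h3 : (d:ℝ) + (d:ℝ)^2 ≠ 0 := by
    rw [show (d:ℝ) + (d:ℝ)^2 = d * (d+1) by ring]; exact mul_ne_zero hd1 hd2
  linear_combination (-(S i K + A)) * (mul_inv_cancel₀ h3)

lemma smap_apply {d : ℕ} (T : Fin n → Fin n → (Fin d → Fin n) → ℝ) (i : Fin n)
    (K : Fin (d + 1) → Fin n) :
    smap n d T i K = ∑ t : Fin (d + 1), T i (K t) (K ∘ t.succAbove) := rfl

lemma mlt_update {e : ℕ} (k : Fin (e + 1) → Fin n) (q : Fin (e + 1)) (j : Fin n) :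
    mlt (Function.update k q j) = j ::ₘ mlt (k ∘ q.succAbove) := by
  have h := mlt_succAbove (Function.update k q j) q
  have h1 : Function.update k q j ∘ q.succAbove = k ∘ q.succAbove := by
    funext u
    exact Function.update_of_ne (Fin.succAbove_ne q u) _ _
  rw [h1, Function.update_self] at h
  exact h

lemma smap_cons {e : ℕ} {T : Fin n → Fin n → (Fin (e + 1) → Fin n) → ℝ} (hT : T ∈ Wsub n (e + 1))
    (i j : Fin n) (k : Fin (e + 1) → Fin n) :
    smap n (e + 1) T i (Fin.cons j k) =
      T i j k + ∑ t : Fin (e + 1), T i (k t) (Function.update k t j) := by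
  rw [smap_apply, Fin.sum_univ_succ]
  have h0 : (Fin.cons j k : Fin (e + 2) → Fin n) ∘ (0 : Fin (e + 2)).succAbove = k := by
    funext u; simp
  rw [h0, Fin.cons_zero]
  congr 1
  refine Finset.sum_congr rfl fun q _ => ?_
  rw [Fin.cons_succ, cons_comp_succ_succAbove]
  refine W_apply_eq hT rfl ?_
  rw [mlt_cons, mlt_update]

lemma smap_eq_zero_iff {e : ℕ} {T : Fin n → Fin n → (Fin (e + 1) → Fin n) → ℝ}
    (hT : T ∈ Wsub n (e + 1)) :
    smap n (e + 1) T = 0 ↔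
      ∀ (i j : Fin n) (k : Fin (e + 1) → Fin n),
        T i j k + ∑ t : Fin (e + 1), T i (k t) (Function.update k t j) = 0 := by
  constructor
  · intro h i j k
    rw [← smap_cons hT, h]
    rfl
  · intro h
    funext i K
    have hK : (Fin.cons (K 0) (K ∘ Fin.succ) : Fin (e + 2) → Fin n) = K := by
      funext u; refine Fin.cases rfl (fun v => rfl) u
    show smap n (e + 1) T i K = 0
    rw [← hK, smap_cons hT]
    rw [h]


end Stmt10Aux

set_option synthInstance.maxHeartbeats 1000000 in
set_option maxHeartbeats 1000000 in
open Stmt10Aux in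
/-- The space `N_r` of normal tensors of order `r ≥ 1` in dimension `n` — the space
of `(r+2)`-covariant tensors (given here by their components) which are symmetric in
the first two indices, symmetric in the last `r` indices, and whose cyclic sum over
the last `r+1` indices vanishes — has dimension
`C(n+1,2)·C(n+r-1,r) − n·C(n+r,r+1)`. -/
theorem stmt10 (n r : ℕ) (hr : 1 ≤ r)
    (N : Submodule ℝ (Fin n → Fin n → (Fin r → Fin n) → ℝ))
    (hN : ∀ T, T ∈ N ↔
      (∀ i j k, T i j k = T j i k) ∧
      (∀ (i j : Fin n) (k : Fin r → Fin n) (σ : Equiv.Perm (Fin r)),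
        T i j (k ∘ σ) = T i j k) ∧
      (∀ (i j : Fin n) (k : Fin r → Fin n),
        T i j k + ∑ t : Fin r, T i (k t) (Function.update k t j) = 0)) :
    Module.finrank ℝ N + n * Nat.choose (n + r) (r + 1) =
      Nat.choose (n + 1) 2 * Nat.choose (n + r - 1) r := by
  classical
  obtain ⟨e, rfl⟩ : ∃ e, r = e + 1 := ⟨r - 1, by omega⟩
  have hNiff : ∀ T, T ∈ N ↔ T ∈ Wsub n (e + 1) ∧ smap n (e + 1) T = 0 := by
    intro T
    rw [hN T]
    constructor
    · rintro ⟨h1, h2, h3⟩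
      have hW : T ∈ Wsub n (e + 1) := (Wsub_def T).2 ⟨h1, h2⟩
      exact ⟨hW, (smap_eq_zero_iff hW).2 h3⟩
    · rintro ⟨hW, hz⟩
      obtain ⟨h1, h2⟩ := (Wsub_def T).1 hW
      exact ⟨h1, h2, (smap_eq_zero_iff hW).1 hz⟩
  set φ := (smap n (e + 1)).domRestrict (Wsub n (e + 1)) with hφ
  have hle : N ≤ Wsub n (e + 1) := fun T hT => ((hNiff T).1 hT).1
  have hker : Submodule.comap (Wsub n (e + 1)).subtype N = LinearMap.ker φ := by
    ext ⟨T, hT⟩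
    simp only [Submodule.mem_comap, Submodule.coe_subtype, LinearMap.mem_ker, hφ,
      LinearMap.domRestrict_apply]
    rw [hNiff T]
    exact ⟨fun h => h.2, fun h => ⟨hT, h⟩⟩
  have hrange : LinearMap.range φ = Usub n (e + 1 + 1) := by
    ext S
    constructor
    · rintro ⟨⟨T, hT⟩, rfl⟩
      exact smap_mem_U hT
    · intro hS
      exact ⟨⟨pre S, pre_mem_W hS⟩, smap_pre (by omega) hS⟩
  have e1 : finrank ℝ N = finrank ℝ (LinearMap.ker φ) := by
    rw [← hker]
    exact (Submodule.comapSubtypeEquivOfLe hle).finrank_eq.symm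
  have e2 : finrank ℝ (LinearMap.range φ) = n * (n + (e + 1)).choose (e + 1 + 1) := by
    have harith : n + (e + 1 + 1) - 1 = n + (e + 1) := by omega
    rw [hrange, finrank_U, harith]
  have rn := LinearMap.finrank_range_add_finrank_ker φ
  have e3 : finrank ℝ (Wsub n (e + 1)) = (n + 1).choose 2 * (n + (e + 1) - 1).choose (e + 1) :=
    finrank_W (e + 1)
  omega
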